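/- Let p : ℝⁿ → ℝ be a continuous homogeneous polynomial of even degree 4 and d ≥ 4 even; define q(x, s) = p(x) + s^d. If p is not convex (equivalently, not quasiconvex), then q is not quasiconvex. -/

import Mathlib

open Filter Real

lemma key_limit (d : ℕ) (hd0 : (d:ℝ) ≠ 0) (A B a b : ℝ)
    (hab : a + b = 1) :
    Filter.Tendsto
      (fun M : ℝ => M - (a*(M-A)^((d:ℝ)⁻¹) + b*(M-B)^((d:ℝ)⁻¹))^d)
      Filter.atTop (nhds (a*A+b*B)) := by
  set r : ℝ := (d:ℝ)⁻¹ with hr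
  set ψ : ℝ → ℝ := fun s => a*(1-A*s)^r + b*(1-B*s)^r with hψ
  set φ : ℝ → ℝ := fun s => (ψ s)^d with hφ
  have hψ0 : ψ 0 = 1 := by simp [hψ, Real.one_rpow, hab]
  have hφ0 : φ 0 = 1 := by simp [hφ, hψ0]
  have hdψ : HasDerivAt ψ (-(a*A+b*B)*r) 0 := by
    have base : ∀ C : ℝ, HasDerivAt (fun s : ℝ => (1 - C*s)^r) (-C*r) 0 := by
      intro C
      have h0 : HasDerivAt (fun s : ℝ => 1 - C*s) (-C) 0 := by
        simpa using ((hasDerivAt_id (0:ℝ)).const_mul C).const_sub 1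
      have := h0.rpow_const (p := r) (Or.inl (by norm_num))
      simpa [Real.one_rpow, mul_comm] using this
    have := ((base A).const_mul a).add ((base B).const_mul b)
    rw [show -(a*A+b*B)*r = a * (-A * r) + b * (-B * r) by ring]
    exact this
  have hdφ : HasDerivAt φ (-(a*A+b*B)) 0 := by
    have h := hdψ.pow d
    have : (d:ℝ) * ψ 0 ^ (d-1) * (-(a*A+b*B)*r) = -(a*A+b*B) := by
      rw [hψ0, one_pow, hr]
      field_simp
    rw [this] at h
    exact h
  have hslope := hasDerivAt_iff_tendsto_slope.mp hdφ
  have hneg : Tendsto (fun s => (1 - φ s)/s) (nhdsWithin 0 {(0:ℝ)}ᶜ)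
      (nhds (a*A+b*B)) := by
    have h := hslope.neg
    rw [neg_neg] at h
    refine h.congr fun s => ?_
    rw [slope_def_field, hφ0, sub_zero]
    ring
  have hinv : Tendsto (fun M : ℝ => M⁻¹) atTop (nhdsWithin 0 {(0:ℝ)}ᶜ) := by
    apply tendsto_nhdsWithin_of_tendsto_nhds_of_eventually_within _ tendsto_inv_atTop_zero
    filter_upwards [eventually_gt_atTop (0:ℝ)] with M hM
    exact (ne_of_gt (inv_pos.2 hM))
  have hcomp := hneg.comp hinv
  refine hcomp.congr' ?_
  filter_upwards [eventually_ge_atTop (|A|+|B|+1)] with M hM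
  have hM0 : (0:ℝ) < M := lt_of_lt_of_le (by positivity) hM
  have hMA : (0:ℝ) ≤ M - A := by
    have := le_abs_self A; have := abs_nonneg B; linarith
  have hMB : (0:ℝ) ≤ M - B := by
    have := le_abs_self B; have := abs_nonneg A; linarith
  have h1A : (0:ℝ) ≤ 1 - A * M⁻¹ := by
    have : (1 : ℝ) - A * M⁻¹ = (M - A) * M⁻¹ := by field_simp
    rw [this]; positivity
  have h1B : (0:ℝ) ≤ 1 - B * M⁻¹ := by
    have : (1 : ℝ) - B * M⁻¹ = (M - B) * M⁻¹ := by field_simp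
    rw [this]; positivity
  have eA : (M - A) = M * (1 - A * M⁻¹) := by field_simp
  have eB : (M - B) = M * (1 - B * M⁻¹) := by field_simp
  have hMr : ((M:ℝ)^r)^d = M := by
    rw [← Real.rpow_natCast (M^r) d, ← Real.rpow_mul hM0.le, hr,
      inv_mul_cancel₀ hd0, Real.rpow_one]
  have expand : (a*(M-A)^r + b*(M-B)^r)^d = M * φ M⁻¹ := by
    rw [eA, eB, Real.mul_rpow hM0.le h1A, Real.mul_rpow hM0.le h1B]
    have : a * (M^r * (1 - A*M⁻¹)^r) + b * (M^r * (1 - B*M⁻¹)^r)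
        = M^r * ψ M⁻¹ := by simp [hψ]; ring
    rw [this, mul_pow, hMr, hφ]
  show (1 - φ M⁻¹) / M⁻¹ = M - (a*(M-A)^r + b*(M-B)^r)^d
  rw [expand, div_eq_mul_inv, inv_inv]
  ring

theorem stmt_15 (n d : ℕ) (hd : Even d) (hd4 : 4 ≤ d)
    (p : (Fin n → ℝ) → ℝ) (hp : Continuous p)
    (hhom : ∀ (c : ℝ) (x : Fin n → ℝ), p (c • x) = c ^ 4 * p x)
    (hnc : ¬ ConvexOn ℝ Set.univ p)
    (q : (Fin n → ℝ) × ℝ → ℝ) (hq : ∀ z, q z = p z.1 + z.2 ^ d) :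
    ¬ (∀ α : ℝ, Convex ℝ {z : (Fin n → ℝ) × ℝ | q z ≤ α}) := by
  intro h
  apply hnc
  have hd0 : (d:ℝ) ≠ 0 := Nat.cast_ne_zero.mpr (by omega)
  refine ⟨convex_univ, ?_⟩
  intro x _ y _ a b ha hb hab
  set A := p x with hA
  set B := p y with hB
  set r : ℝ := (d:ℝ)⁻¹ with hr
  have hlim := key_limit d hd0 A B a b hab
  have key : ∀ᶠ M in atTop,
      p (a • x + b • y) ≤ M - (a*(M-A)^r + b*(M-B)^r)^d := by
    filter_upwards [eventually_ge_atTop (|A|+|B|+1)] with M hM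
    have hMA : (0:ℝ) ≤ M - A := by
      have := le_abs_self A; have := abs_nonneg B; linarith
    have hMB : (0:ℝ) ≤ M - B := by
      have := le_abs_self B; have := abs_nonneg A; linarith
    have pow_eq : ∀ t : ℝ, 0 ≤ t → (t ^ r) ^ d = t := by
      intro t ht
      rw [← Real.rpow_natCast (t^r) d, ← Real.rpow_mul ht, hr,
        inv_mul_cancel₀ hd0, Real.rpow_one]
    have m1 : ((x, (M-A)^r) : (Fin n → ℝ) × ℝ) ∈ {z | q z ≤ M} := by
      simp only [Set.mem_setOf_eq, hq]
      rw [pow_eq _ hMA]; simp [hA]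
    have m2 : ((y, (M-B)^r) : (Fin n → ℝ) × ℝ) ∈ {z | q z ≤ M} := by
      simp only [Set.mem_setOf_eq, hq]
      rw [pow_eq _ hMB]; simp [hB]
    have hmem := h M m1 m2 ha hb hab
    simp only [Set.mem_setOf_eq, hq, Prod.smul_mk, Prod.mk_add_mk, smul_eq_mul] at hmem
    linarith [hmem]
  have := ge_of_tendsto hlim key
  simpa [smul_eq_mul] using this
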